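/- Suppose that for every finite simple bipartite graph H admitting a perfect target set one has α·|V(H)| ≤ NPPTS(H) ≤ β·|V(H)| under the strict majority threshold (where α, β are fixed real constants). Then for every finite simple graph G admitting a perfect target set, α·|V(G)| ≤ NPPTS(G) ≤ β·|V(G)| under the strict majority threshold. -/

import Mathlib

/-! Non-progressive spread of influence under the strict majority threshold. -/

/-- The degree `d(v)` of a vertex: the number of its neighbors. -/
noncomputable def vdeg {V : Type*} (G : SimpleGraph V) (v : V) : ℕ :=
  {u | G.Adj v u}.ncard

/-- The strict majority threshold `t(v) = ⌈(d(v)+1)/2⌉`. -/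
noncomputable def vthr {V : Type*} (G : SimpleGraph V) (v : V) : ℕ :=
  (vdeg G v + 2) / 2

/-- The number of neighbors of `v` that are currently infected under `f`. -/
noncomputable def infNbrs {V : Type*} (G : SimpleGraph V) (f : V → Prop) (v : V) : ℕ :=
  {u | G.Adj v u ∧ f u}.ncard

/-- The state `f_τ` of the non-progressive strict majority process started at `f0`:
`f_τ(v) = 1` iff at least `t(v)` neighbors of `v` were infected at time `τ - 1`. -/
def stateAt {V : Type*} (G : SimpleGraph V) (f0 : V → Prop) : ℕ → V → Prop
  | 0 => f0
  | τ + 1 => fun v => vthr G v ≤ infNbrs G (stateAt G f0 τ) v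

/-- `f0` is a perfect target set: at some finite time every vertex is infected. -/
def IsPTS {V : Type*} (G : SimpleGraph V) (f0 : V → Prop) : Prop :=
  ∃ τ : ℕ, ∀ v, stateAt G f0 τ v

/-- The cost of an initial assignment: the number of initially infected vertices. -/
noncomputable def ptsCost {V : Type*} (f0 : V → Prop) : ℕ :=
  {v | f0 v}.ncard

/-- `NPPTS G`: the minimum cost of a perfect target set of `G` (non-progressive model). -/
noncomputable def NPPTS {V : Type*} (G : SimpleGraph V) : ℕ :=
  sInf {c | ∃ f0 : V → Prop, IsPTS G f0 ∧ ptsCost f0 = c}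

/-- `G` is bipartite with parts `X` and `Y`: the parts are disjoint, cover the vertices,
and every edge goes between `X` and `Y`. -/
def BipartiteWith {V : Type*} (G : SimpleGraph V) (X Y : Set V) : Prop :=
  Disjoint X Y ∧ (∀ v, v ∈ X ∨ v ∈ Y) ∧
    ∀ ⦃a b⦄, G.Adj a b → (a ∈ X ∧ b ∈ Y) ∨ (a ∈ Y ∧ b ∈ X)

universe u

section DoubleCover

variable {V : Type u} (G : SimpleGraph V)

/-- Bipartite double cover of `G`. -/
private def dbl : SimpleGraph (V × Bool) where
  Adj p q := G.Adj p.1 q.1 ∧ p.2 ≠ q.2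
  symm := ⟨fun p q h => ⟨h.1.symm, h.2.symm⟩⟩
  loopless := ⟨fun p h => h.2 rfl⟩

private lemma inj_mk (b : Bool) : Function.Injective (fun u : V => (u, b)) :=
  fun a a' h => congrArg Prod.fst h

private lemma vdeg_dbl (v : V) (i : Bool) : vdeg (dbl G) (v, i) = vdeg G v := by
  unfold vdeg
  have h : {q : V × Bool | (dbl G).Adj (v, i) q}
      = (fun u => (u, !i)) '' {u | G.Adj v u} := by
    ext ⟨u, j⟩
    constructor
    · rintro ⟨hadj, hne⟩
      have hj : j = !i := by cases i <;> cases j <;> simp_all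
      exact ⟨u, hadj, by rw [hj]⟩
    · rintro ⟨u', hadj, heq⟩
      injection heq with h1 h2
      subst h1; subst h2
      exact ⟨hadj, by cases i <;> simp⟩
  rw [h, Set.ncard_image_of_injective _ (inj_mk (!i))]

private lemma vthr_dbl (v : V) (i : Bool) : vthr (dbl G) (v, i) = vthr G v := by
  unfold vthr; rw [vdeg_dbl]

private lemma infNbrs_dbl (f : V × Bool → Prop) (v : V) (i : Bool) :
    infNbrs (dbl G) f (v, i) = infNbrs G (fun u => f (u, !i)) v := by
  unfold infNbrs
  have h : {q : V × Bool | (dbl G).Adj (v, i) q ∧ f q}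
      = (fun u => (u, !i)) '' {u | G.Adj v u ∧ f (u, !i)} := by
    ext ⟨u, j⟩
    constructor
    · rintro ⟨⟨hadj, hne⟩, hf⟩
      have hj : j = !i := by cases i <;> cases j <;> simp_all
      subst hj
      exact ⟨u, ⟨hadj, hf⟩, rfl⟩
    · rintro ⟨u', ⟨hadj, hf⟩, heq⟩
      injection heq with h1 h2
      subst h1; subst h2
      exact ⟨⟨hadj, by cases i <;> simp⟩, hf⟩
  rw [h, Set.ncard_image_of_injective _ (inj_mk (!i))]

/-- The parity-tracking flip: which layer of the double cover feeds time `τ`. -/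
private def flipIter : Bool → ℕ → Bool
  | i, 0 => i
  | i, τ + 1 => flipIter (!i) τ

private lemma flipIter_not : ∀ (τ : ℕ) (i : Bool), flipIter (!i) τ = !(flipIter i τ)
  | 0, _ => rfl
  | τ + 1, i => by
      show flipIter (!!i) τ = !(flipIter (!i) τ)
      rw [← flipIter_not τ (!i)]

private lemma stateAt_dbl (g0 : V × Bool → Prop) :
    ∀ (τ : ℕ) (i : Bool) (v : V),
      stateAt (dbl G) g0 τ (v, i) ↔ stateAt G (fun w => g0 (w, flipIter i τ)) τ v
  | 0, _, _ => Iff.rfl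
  | τ + 1, i, v => by
      show vthr (dbl G) (v, i) ≤ infNbrs (dbl G) (stateAt (dbl G) g0 τ) (v, i)
        ↔ vthr G v ≤ infNbrs G (stateAt G (fun w => g0 (w, flipIter i (τ + 1))) τ) v
      rw [vthr_dbl, infNbrs_dbl]
      have h : (fun u => stateAt (dbl G) g0 τ (u, !i))
          = stateAt G (fun w => g0 (w, flipIter i (τ + 1))) τ :=
        funext fun u => propext (stateAt_dbl g0 τ (!i) u)
      rw [h]

private lemma cost_split [Finite V] (g : V × Bool → Prop) :
    ptsCost g = ptsCost (fun v => g (v, false)) + ptsCost (fun v => g (v, true)) := by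
  unfold ptsCost
  have hA : {p : V × Bool | g p}
      = (fun v => (v, false)) '' {v | g (v, false)}
        ∪ (fun v => (v, true)) '' {v | g (v, true)} := by
    ext ⟨v, b⟩
    cases b <;> simp
  have hdisj : Disjoint ((fun v : V => (v, false)) '' {v | g (v, false)})
      ((fun v : V => (v, true)) '' {v | g (v, true)}) := by
    rw [Set.disjoint_left]
    rintro p ⟨v, _, rfl⟩ ⟨w, _, heq⟩
    exact absurd (congrArg Prod.snd heq) (by simp)
  rw [hA, Set.ncard_union_eq hdisj (Set.toFinite _) (Set.toFinite _),
    Set.ncard_image_of_injective _ (inj_mk false),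
    Set.ncard_image_of_injective _ (inj_mk true)]

end DoubleCover


/-- If `α·|V(H)| ≤ NPPTS(H) ≤ β·|V(H)|` holds for every finite simple
bipartite graph `H` admitting a perfect target set (strict majority threshold), then
`α·|V(G)| ≤ NPPTS(G) ≤ β·|V(G)|` for every finite simple graph `G` admitting a perfect
target set. -/
theorem stmt_0 (α β : ℝ)
    (hbip : ∀ (W : Type u) [Fintype W] (H : SimpleGraph W),
      (∃ X Y : Set W, BipartiteWith H X Y) → (∃ g0 : W → Prop, IsPTS H g0) →
      α * (Fintype.card W : ℝ) ≤ (NPPTS H : ℝ) ∧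
        (NPPTS H : ℝ) ≤ β * (Fintype.card W : ℝ)) :
    ∀ (V : Type u) [Fintype V] (G : SimpleGraph V),
      (∃ f0 : V → Prop, IsPTS G f0) →
      α * (Fintype.card V : ℝ) ≤ (NPPTS G : ℝ) ∧
        (NPPTS G : ℝ) ≤ β * (Fintype.card V : ℝ) := by
  intro V _ G hG
  obtain ⟨f0, hf0⟩ := hG
  -- lifting a PTS of G to the double cover
  have hlift : ∀ f : V → Prop, IsPTS G f → IsPTS (dbl G) (fun p => f p.1) := by
    rintro f ⟨τ, hτ⟩
    exact ⟨τ, fun p => (stateAt_dbl G (fun q => f q.1) τ p.2 p.1).mpr (hτ p.1)⟩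
  have hBpts : IsPTS (dbl G) (fun p => f0 p.1) := hlift f0 hf0
  -- minimizers exist
  obtain ⟨fm, hfm, hfmc⟩ :
      NPPTS G ∈ {c | ∃ f : V → Prop, IsPTS G f ∧ ptsCost f = c} :=
    Nat.sInf_mem ⟨_, f0, hf0, rfl⟩
  obtain ⟨gm, hgm, hgmc⟩ :
      NPPTS (dbl G) ∈ {c | ∃ g : V × Bool → Prop, IsPTS (dbl G) g ∧ ptsCost g = c} :=
    Nat.sInf_mem ⟨_, _, hBpts, rfl⟩
  -- NPPTS (dbl G) ≤ 2 * NPPTS G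
  have h1 : NPPTS (dbl G) ≤ 2 * NPPTS G := by
    have hp : IsPTS (dbl G) (fun p => fm p.1) := hlift fm hfm
    have hle : NPPTS (dbl G) ≤ ptsCost (fun p : V × Bool => fm p.1) :=
      Nat.sInf_le ⟨_, hp, rfl⟩
    have hc := cost_split (fun p : V × Bool => fm p.1)
    have hx : ptsCost (fun v : V => fm v) = NPPTS G := hfmc
    have he1 : ptsCost (fun v : V => fm (v, false).1) = ptsCost (fun v : V => fm v) := rfl
    have he2 : ptsCost (fun v : V => fm (v, true).1) = ptsCost (fun v : V => fm v) := rfl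
    omega
  -- 2 * NPPTS G ≤ NPPTS (dbl G)
  have h2 : 2 * NPPTS G ≤ NPPTS (dbl G) := by
    obtain ⟨τ, hτ⟩ := hgm
    have hall : ∀ i : Bool, ∀ v : V, stateAt G (fun w => gm (w, flipIter i τ)) τ v :=
      fun i v => (stateAt_dbl G gm τ i v).mp (hτ (v, i))
    have hft : flipIter true τ = !(flipIter false τ) := flipIter_not τ false
    have hPTS : IsPTS G (fun w => gm (w, false)) ∧ IsPTS G (fun w => gm (w, true)) := by
      cases hb : flipIter false τ with
      | false =>
          refine ⟨⟨τ, ?_⟩, ⟨τ, ?_⟩⟩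
          · have h := hall false; rwa [hb] at h
          · have h := hall true; rwa [hft, hb] at h
      | true =>
          refine ⟨⟨τ, ?_⟩, ⟨τ, ?_⟩⟩
          · have h := hall true; rwa [hft, hb] at h
          · have h := hall false; rwa [hb] at h
    have ha : NPPTS G ≤ ptsCost (fun w : V => gm (w, false)) :=
      Nat.sInf_le ⟨_, hPTS.1, rfl⟩
    have hb : NPPTS G ≤ ptsCost (fun w : V => gm (w, true)) :=
      Nat.sInf_le ⟨_, hPTS.2, rfl⟩
    have hc := cost_split gm
    omega
  -- apply the bipartite hypothesis to the double cover
  have hbipart : ∃ X Y : Set (V × Bool), BipartiteWith (dbl G) X Y := by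
    refine ⟨{p | p.2 = false}, {p | p.2 = true}, ?_, ?_, ?_⟩
    · rw [Set.disjoint_left]; rintro p h1 h2; simp_all
    · intro p; cases hp : p.2 <;> simp [hp]
    · rintro ⟨a, i⟩ ⟨b, j⟩ ⟨hadj, hne⟩
      cases i <;> cases j <;> simp_all
  obtain ⟨hlow, hhigh⟩ := hbip (V × Bool) (dbl G) hbipart ⟨_, hBpts⟩
  have hcard : (Fintype.card (V × Bool) : ℝ) = 2 * (Fintype.card V : ℝ) := by
    rw [Fintype.card_prod, Fintype.card_bool]; push_cast; ring
  have hEq : (NPPTS (dbl G) : ℝ) = 2 * (NPPTS G : ℝ) := by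
    have : NPPTS (dbl G) = 2 * NPPTS G := le_antisymm h1 h2
    rw [this]; push_cast; ring
  rw [hcard, hEq] at hlow hhigh
  constructor <;> nlinarith [hlow, hhigh]
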